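/- Uniform convergence: Let H be a nonempty set of measurable NE approximators, D a probability measure on U, and ε, δ ∈ (0,1). Suppose C is a nonempty finite set of measurable NE approximators of cardinality K that (ε/6)-covers H, and assume the set {S ∈ U^m : ∃h ∈ H, |L_S(h) − L_D(h)| > ε} is measurable with respect to D^m. If m ≥ (9 / (2·ε²)) · (ln(2/δ) + ln K), then with probability at least 1 − δ over the draw of an i.i.d. sample S ∼ D^m, every h ∈ H satisfies |L_S(h) − L_D(h)| ≤ ε. -/

import Mathlib

open Finset MeasureTheory

section NashDefs

variable {N : Type*} {A : N → Type*}

/-- `σ` is a mixed strategy profile: each `σ i` is a probability distribution on `A i`. -/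
def IsMixedProfile [∀ i, Fintype (A i)] (σ : ∀ i, A i → ℝ) : Prop :=
  (∀ i a, 0 ≤ σ i a) ∧ ∀ i, ∑ a, σ i a = 1

/-- Expected utility of player `i` when the mixed strategy profile `σ` is played:
`u_i(σ) = ∑_{a ∈ A} (∏_j σ_j(a_j)) u_i(a)`. -/
def expUtil [Fintype N] [DecidableEq N] [∀ i, Fintype (A i)]
    (u : N → (∀ j, A j) → ℝ) (i : N) (σ : ∀ j, A j → ℝ) : ℝ :=
  ∑ a : ∀ j, A j, (∏ j, σ j (a j)) * u i a

/-- The pure strategy of player `i` playing action `b` with probability one. -/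
def pureStrat [∀ i, DecidableEq (A i)] {i : N} (b : A i) : A i → ℝ :=
  fun c => if c = b then 1 else 0

/-- Nash approximation loss:
`NashApr(σ, u) = max_{i ∈ N} max_{b ∈ A_i} [u_i(b, σ_{-i}) - u_i(σ)]`. -/
noncomputable def nashApr [Fintype N] [DecidableEq N] [Nonempty N]
    [∀ i, Fintype (A i)] [∀ i, DecidableEq (A i)] [∀ i, Nonempty (A i)]
    (σ : ∀ i, A i → ℝ) (u : N → (∀ j, A j) → ℝ) : ℝ :=
  Finset.univ.sup' Finset.univ_nonempty fun i : N =>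
    Finset.univ.sup' Finset.univ_nonempty fun b : A i =>
      expUtil u i (Function.update σ i (pureStrat b)) - expUtil u i σ

/-- ℓ1-distance between mixed strategy profiles:
`‖σ - σ'‖₁ = ∑_{i ∈ N} ∑_{a_i ∈ A_i} |σ_i(a_i) - σ'_i(a_i)|`. -/
def dist1 [Fintype N] [∀ i, Fintype (A i)] (σ σ' : ∀ i, A i → ℝ) : ℝ :=
  ∑ i, ∑ a, |σ i a - σ' i a|

/-- ℓmax-distance between game utilities:
`‖u - v‖max = max_{i ∈ N} max_{a ∈ A} |u_i(a) - v_i(a)|`. -/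
noncomputable def distMax [Fintype N] [DecidableEq N] [Nonempty N]
    [∀ i, Fintype (A i)] [∀ i, Nonempty (A i)]
    (u v : N → (∀ j, A j) → ℝ) : ℝ :=
  Finset.univ.sup' Finset.univ_nonempty fun i : N =>
    Finset.univ.sup' Finset.univ_nonempty fun a : ∀ j, A j => |u i a - v i a|

end NashDefs

/-- The set of all game utilities (with values in `[0,1]`) for fixed players `N`
and action space `A`, as a subtype. -/
abbrev GameUtil (N : Type*) (A : N → Type*) : Type _ :=
  {u : N → (∀ j, A j) → ℝ // ∀ i a, u i a ∈ Set.Icc (0 : ℝ) 1}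

/-- An NE approximator maps game utilities to mixed strategy profiles. -/
abbrev NEApprox (N : Type*) (A : N → Type*) [∀ i, Fintype (A i)] : Type _ :=
  {h : GameUtil N A → ∀ i, A i → ℝ // ∀ u, IsMixedProfile (h u)}

section Risk

variable {N : Type*} {A : N → Type*} [Fintype N] [DecidableEq N] [Nonempty N]
  [∀ i, Fintype (A i)] [∀ i, DecidableEq (A i)] [∀ i, Nonempty (A i)]

/-- Nash approximation loss of an NE approximator on a game. -/
noncomputable def nashLoss (h : NEApprox N A) (u : GameUtil N A) : ℝ :=
  nashApr (h.1 u) u.1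

/-- True risk `L_D(h) = E_{u ∼ D}[NashApr(h(u), u)]`. -/
noncomputable def trueRisk (D : Measure (GameUtil N A)) (h : NEApprox N A) : ℝ :=
  ∫ u, nashLoss h u ∂D

/-- Empirical risk `L_S(h) = (1/m) ∑_j NashApr(h(u⁽ʲ⁾), u⁽ʲ⁾)`. -/
noncomputable def empRisk {m : ℕ} (S : Fin m → GameUtil N A) (h : NEApprox N A) : ℝ :=
  (1 / (m : ℝ)) * ∑ j, nashLoss h (S j)

/-- `C` `r`-covers `H` under the `ℓ_{∞,1}`-distance:
every `h ∈ H` is within `ℓ_{∞,1}`-distance `r` of some `g ∈ C`. -/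
def Covers (r : ℝ) (C : Finset (NEApprox N A)) (H : Set (NEApprox N A)) : Prop :=
  ∀ h ∈ H, ∃ g ∈ C, ∀ u, dist1 (h.1 u) (g.1 u) ≤ r

end Risk

section Aux
set_option linter.unusedSectionVars false

variable {N : Type*} {A : N → Type*} [Fintype N] [DecidableEq N] [Nonempty N]
  [∀ i, Fintype (A i)] [∀ i, DecidableEq (A i)] [∀ i, Nonempty (A i)]

lemma sum_prod_pi (f : ∀ i, A i → ℝ) :
    ∑ a : ∀ j, A j, ∏ j, f j (a j) = ∏ j, ∑ x, f j x :=
  (Fintype.prod_sum f).symm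

lemma IsMixedProfile.sum_prod_eq_one {σ : ∀ i, A i → ℝ} (hσ : IsMixedProfile σ) :
    ∑ a : ∀ j, A j, ∏ j, σ j (a j) = 1 := by
  rw [sum_prod_pi]
  simp [hσ.2]

lemma expUtil_nonneg {u : N → (∀ j, A j) → ℝ} (hu : ∀ i a, u i a ∈ Set.Icc (0:ℝ) 1)
    {σ : ∀ i, A i → ℝ} (hσ : IsMixedProfile σ) (i : N) : 0 ≤ expUtil u i σ :=
  Finset.sum_nonneg fun a _ =>
    mul_nonneg (Finset.prod_nonneg fun j _ => hσ.1 j _) (hu i a).1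

lemma expUtil_le_one {u : N → (∀ j, A j) → ℝ} (hu : ∀ i a, u i a ∈ Set.Icc (0:ℝ) 1)
    {σ : ∀ i, A i → ℝ} (hσ : IsMixedProfile σ) (i : N) : expUtil u i σ ≤ 1 := by
  calc expUtil u i σ ≤ ∑ a : ∀ j, A j, ∏ j, σ j (a j) := by
        refine Finset.sum_le_sum fun a _ => ?_
        exact mul_le_of_le_one_right (Finset.prod_nonneg fun j _ => hσ.1 j _) (hu i a).2
    _ = 1 := hσ.sum_prod_eq_one

lemma isMixed_update {σ : ∀ i, A i → ℝ} (hσ : IsMixedProfile σ) (i : N) (b : A i) :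
    IsMixedProfile (Function.update σ i (pureStrat b)) := by
  constructor
  · intro j a
    rcases eq_or_ne j i with rfl | hj
    · simp only [Function.update_self, pureStrat]
      split <;> norm_num
    · simpa [Function.update_of_ne hj] using hσ.1 j a
  · intro j
    rcases eq_or_ne j i with rfl | hj
    · simp [Function.update_self, pureStrat]
    · simp [Function.update_of_ne hj, hσ.2 j]

lemma prod_update_pure (σ : ∀ i, A i → ℝ) (i : N) (b : A i) (a : ∀ j, A j) :
    ∏ j, Function.update σ i (pureStrat b) j (a j)
      = pureStrat b (a i) * ∏ j ∈ Finset.univ.erase i, σ j (a j) := by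
  rw [← Finset.mul_prod_erase Finset.univ _ (Finset.mem_univ i), Function.update_self]
  congr 1
  exact Finset.prod_congr rfl fun j hj => by
    rw [Function.update_of_ne (Finset.ne_of_mem_erase hj)]

lemma expUtil_decomp (u : N → (∀ j, A j) → ℝ) (i : N) (σ : ∀ i, A i → ℝ) :
    expUtil u i σ
      = ∑ b : A i, σ i b * expUtil u i (Function.update σ i (pureStrat b)) := by
  unfold expUtil
  simp_rw [prod_update_pure, Finset.mul_sum]
  rw [Finset.sum_comm]
  refine Finset.sum_congr rfl fun a _ => ?_
  have key : ∀ b : A i, σ i b * (pureStrat b (a i) * (∏ j ∈ Finset.univ.erase i, σ j (a j)) * u i a)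
      = (if a i = b then σ i b * ((∏ j ∈ Finset.univ.erase i, σ j (a j)) * u i a) else 0) := by
    intro b
    unfold pureStrat
    split <;> simp <;> ring
  rw [Finset.sum_congr rfl fun b _ => key b, Finset.sum_ite_eq]
  simp only [Finset.mem_univ, if_true]
  rw [← Finset.mul_prod_erase Finset.univ (fun j => σ j (a j)) (Finset.mem_univ i)]
  ring

lemma nashApr_nonneg {u : N → (∀ j, A j) → ℝ} (hu : ∀ i a, u i a ∈ Set.Icc (0:ℝ) 1)
    {σ : ∀ i, A i → ℝ} (hσ : IsMixedProfile σ) : 0 ≤ nashApr σ u := by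
  obtain ⟨i⟩ := ‹Nonempty N›
  obtain ⟨b, -, hb⟩ := Finset.exists_max_image Finset.univ
    (fun b : A i => expUtil u i (Function.update σ i (pureStrat b))) Finset.univ_nonempty
  have hle : expUtil u i σ ≤ expUtil u i (Function.update σ i (pureStrat b)) := by
    rw [expUtil_decomp u i σ]
    calc ∑ c : A i, σ i c * expUtil u i (Function.update σ i (pureStrat c))
        ≤ ∑ c : A i, σ i c * expUtil u i (Function.update σ i (pureStrat b)) := by
          refine Finset.sum_le_sum fun c _ => ?_
          exact mul_le_mul_of_nonneg_left (hb c (Finset.mem_univ c)) (hσ.1 i c)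
      _ = expUtil u i (Function.update σ i (pureStrat b)) := by
          rw [← Finset.sum_mul, hσ.2 i, one_mul]
  have h1 : (0:ℝ) ≤ expUtil u i (Function.update σ i (pureStrat b)) - expUtil u i σ := by
    linarith
  refine le_trans h1 ?_
  refine le_trans (Finset.le_sup'
    (fun b : A i => expUtil u i (Function.update σ i (pureStrat b)) - expUtil u i σ)
    (Finset.mem_univ b)) ?_
  exact Finset.le_sup' (fun i : N => Finset.univ.sup' Finset.univ_nonempty
    fun b : A i => expUtil u i (Function.update σ i (pureStrat b)) - expUtil u i σ)
    (Finset.mem_univ i)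

lemma nashApr_le_one {u : N → (∀ j, A j) → ℝ} (hu : ∀ i a, u i a ∈ Set.Icc (0:ℝ) 1)
    {σ : ∀ i, A i → ℝ} (hσ : IsMixedProfile σ) : nashApr σ u ≤ 1 := by
  refine Finset.sup'_le _ _ fun i _ => Finset.sup'_le _ _ fun b _ => ?_
  have h1 := expUtil_le_one hu (isMixed_update hσ i b) i
  have h2 := expUtil_nonneg hu hσ i
  linarith

lemma dist1_nonneg {σ σ' : ∀ i, A i → ℝ} : 0 ≤ dist1 σ σ' :=
  Finset.sum_nonneg fun i _ => Finset.sum_nonneg fun a _ => abs_nonneg _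

lemma dist1_comm (σ σ' : ∀ i, A i → ℝ) : dist1 σ σ' = dist1 σ' σ := by
  unfold dist1
  exact Finset.sum_congr rfl fun i _ => Finset.sum_congr rfl fun a _ => abs_sub_comm _ _

lemma sum_abs_prod_sub_prod_le {σ σ' : ∀ i, A i → ℝ}
    (hσ : IsMixedProfile σ) (hσ' : IsMixedProfile σ') :
    ∑ a : ∀ j, A j, |(∏ j, σ' j (a j)) - ∏ j, σ j (a j)| ≤ dist1 σ σ' := by
  have main : ∀ s : Finset N,
      ∑ a : ∀ j, A j, |(∏ j, (if j ∈ s then σ' j else σ j) (a j)) - ∏ j, σ j (a j)|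
        ≤ ∑ i ∈ s, ∑ x, |σ i x - σ' i x| := by
    intro s
    induction s using Finset.induction_on with
    | empty => simp
    | @insert i s his ih =>
      set τ : ∀ j, A j → ℝ := fun j => if j ∈ s then σ' j else σ j with hτ
      have hτmix : IsMixedProfile τ := by
        constructor
        · intro j a; by_cases hj : j ∈ s <;> simp [hτ, hj, hσ.1 j a, hσ'.1 j a]
        · intro j; by_cases hj : j ∈ s <;> simp [hτ, hj, hσ.2 j, hσ'.2 j]
      have hstep : ∀ a : ∀ j, A j,
          (∏ j, (if j ∈ insert i s then σ' j else σ j) (a j)) - ∏ j, τ j (a j)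
            = (σ' i (a i) - σ i (a i)) * ∏ j ∈ Finset.univ.erase i, τ j (a j) := by
        intro a
        rw [← Finset.mul_prod_erase Finset.univ
            (fun j => (if j ∈ insert i s then σ' j else σ j) (a j)) (Finset.mem_univ i),
          ← Finset.mul_prod_erase Finset.univ (fun j => τ j (a j)) (Finset.mem_univ i)]
        have h1 : ∀ j ∈ Finset.univ.erase i,
            (if j ∈ insert i s then σ' j else σ j) (a j) = τ j (a j) := by
          intro j hj
          have hne : j ≠ i := Finset.ne_of_mem_erase hj
          simp [hτ, Finset.mem_insert, hne]
        rw [Finset.prod_congr rfl h1]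
        have h2 : (if i ∈ insert i s then σ' i else σ i) (a i) = σ' i (a i) := by simp
        have h3 : τ i (a i) = σ i (a i) := by simp [hτ, his]
        rw [h2, h3, sub_mul]
      have hsum1 : ∑ a : ∀ j, A j,
          |(σ' i (a i) - σ i (a i)) * ∏ j ∈ Finset.univ.erase i, τ j (a j)|
            = ∑ x, |σ i x - σ' i x| := by
        have heq : ∀ a : ∀ j, A j,
            |(σ' i (a i) - σ i (a i)) * ∏ j ∈ Finset.univ.erase i, τ j (a j)|
              = ∏ j, (Function.update τ i (fun x => |σ' i x - σ i x|)) j (a j) := by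
          intro a
          rw [← Finset.mul_prod_erase Finset.univ
            (fun j => (Function.update τ i (fun x => |σ' i x - σ i x|)) j (a j))
            (Finset.mem_univ i), Function.update_self]
          rw [abs_mul, abs_of_nonneg (Finset.prod_nonneg fun j _ => hτmix.1 j _)]
          congr 1
          exact Finset.prod_congr rfl fun j hj => by
            rw [Function.update_of_ne (Finset.ne_of_mem_erase hj)]
        rw [Finset.sum_congr rfl fun a _ => heq a, sum_prod_pi]
        rw [← Finset.mul_prod_erase Finset.univ
          (fun j => ∑ x, (Function.update τ i (fun x => |σ' i x - σ i x|)) j x)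
          (Finset.mem_univ i), Function.update_self]
        have hone : ∀ j ∈ Finset.univ.erase i,
            ∑ x, (Function.update τ i (fun x => |σ' i x - σ i x|)) j x = 1 := by
          intro j hj
          rw [show (Function.update τ i (fun x => |σ' i x - σ i x|)) j = τ j from
            Function.update_of_ne (Finset.ne_of_mem_erase hj) _ _]
          exact hτmix.2 j
        rw [Finset.prod_congr rfl hone, Finset.prod_const_one, mul_one]
        exact Finset.sum_congr rfl fun x _ => abs_sub_comm _ _
      calc ∑ a : ∀ j, A j, |(∏ j, (if j ∈ insert i s then σ' j else σ j) (a j)) - ∏ j, σ j (a j)|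
          ≤ ∑ a : ∀ j, A j,
              (|(∏ j, (if j ∈ insert i s then σ' j else σ j) (a j)) - ∏ j, τ j (a j)|
                + |(∏ j, τ j (a j)) - ∏ j, σ j (a j)|) := by
            refine Finset.sum_le_sum fun a _ => ?_
            exact (abs_sub_le _ _ _)
        _ = ∑ a : ∀ j, A j, |(∏ j, (if j ∈ insert i s then σ' j else σ j) (a j)) - ∏ j, τ j (a j)|
              + ∑ a : ∀ j, A j, |(∏ j, τ j (a j)) - ∏ j, σ j (a j)| := Finset.sum_add_distrib
        _ ≤ ∑ x, |σ i x - σ' i x| + ∑ i ∈ s, ∑ x, |σ i x - σ' i x| := by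
            refine add_le_add ?_ ih
            rw [Finset.sum_congr rfl fun a _ => congrArg abs (hstep a)]
            exact le_of_eq hsum1
        _ = ∑ i' ∈ insert i s, ∑ x, |σ i' x - σ' i' x| := by rw [Finset.sum_insert his]
  have := main Finset.univ
  simpa [dist1] using this
lemma abs_expUtil_sub_le {u : N → (∀ j, A j) → ℝ} (hu : ∀ i a, u i a ∈ Set.Icc (0:ℝ) 1)
    (i : N) {σ σ' : ∀ i, A i → ℝ} (hσ : IsMixedProfile σ) (hσ' : IsMixedProfile σ') :
    |expUtil u i σ - expUtil u i σ'|
      ≤ (1/2) * ∑ a : ∀ j, A j, |(∏ j, σ j (a j)) - ∏ j, σ' j (a j)| := by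
  have hid : expUtil u i σ - expUtil u i σ'
      = ∑ a : ∀ j, A j, ((∏ j, σ j (a j)) - ∏ j, σ' j (a j)) * (u i a - 1/2) := by
    have key : ∀ a : ∀ j, A j,
        ((∏ j, σ j (a j)) - ∏ j, σ' j (a j)) * (u i a - 1/2)
          = (∏ j, σ j (a j)) * u i a - (∏ j, σ' j (a j)) * u i a
            - ((1/2) * (∏ j, σ j (a j)) - (1/2) * ∏ j, σ' j (a j)) := by
      intro a; ring
    rw [Finset.sum_congr rfl fun a _ => key a, Finset.sum_sub_distrib,
      Finset.sum_sub_distrib, Finset.sum_sub_distrib, ← Finset.mul_sum, ← Finset.mul_sum,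
      hσ.sum_prod_eq_one, hσ'.sum_prod_eq_one]
    simp [expUtil]
  rw [hid]
  calc |∑ a : ∀ j, A j, ((∏ j, σ j (a j)) - ∏ j, σ' j (a j)) * (u i a - 1/2)|
      ≤ ∑ a : ∀ j, A j, |((∏ j, σ j (a j)) - ∏ j, σ' j (a j)) * (u i a - 1/2)| :=
        Finset.abs_sum_le_sum_abs _ _
    _ ≤ ∑ a : ∀ j, A j, |(∏ j, σ j (a j)) - ∏ j, σ' j (a j)| * (1/2) := by
        refine Finset.sum_le_sum fun a _ => ?_
        rw [abs_mul]
        refine mul_le_mul_of_nonneg_left ?_ (abs_nonneg _)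
        rw [abs_le]
        constructor
        · have := (hu i a).1; linarith
        · have := (hu i a).2; linarith
    _ = (1/2) * ∑ a : ∀ j, A j, |(∏ j, σ j (a j)) - ∏ j, σ' j (a j)| := by
        rw [← Finset.sum_mul]; ring

lemma dist1_update_le (σ σ' : ∀ i, A i → ℝ) (i : N) (b : A i) :
    dist1 (Function.update σ i (pureStrat b)) (Function.update σ' i (pureStrat b))
      ≤ dist1 σ σ' := by
  unfold dist1
  refine Finset.sum_le_sum fun j _ => ?_
  rcases eq_or_ne j i with rfl | hj
  · simp only [Function.update_self, sub_self, abs_zero, Finset.sum_const_zero]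
    exact Finset.sum_nonneg fun a _ => abs_nonneg _
  · rw [Function.update_of_ne hj, Function.update_of_ne hj]

lemma abs_expUtil_sub_le' {u : N → (∀ j, A j) → ℝ} (hu : ∀ i a, u i a ∈ Set.Icc (0:ℝ) 1)
    (i : N) {σ σ' : ∀ i, A i → ℝ} (hσ : IsMixedProfile σ) (hσ' : IsMixedProfile σ') :
    |expUtil u i σ - expUtil u i σ'| ≤ (1/2) * dist1 σ σ' := by
  refine (abs_expUtil_sub_le hu i hσ hσ').trans ?_
  have h := sum_abs_prod_sub_prod_le hσ' hσ
  rw [dist1_comm] at h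
  have h2 : ∑ a : ∀ j, A j, |(∏ j, σ j (a j)) - ∏ j, σ' j (a j)|
      = ∑ a : ∀ j, A j, |(∏ j, σ' j (a j)) - ∏ j, σ j (a j)| :=
    Finset.sum_congr rfl fun a _ => abs_sub_comm _ _
  rw [h2]
  linarith

lemma nashApr_le_nashApr_add {u : N → (∀ j, A j) → ℝ} (hu : ∀ i a, u i a ∈ Set.Icc (0:ℝ) 1)
    {σ σ' : ∀ i, A i → ℝ} (hσ : IsMixedProfile σ) (hσ' : IsMixedProfile σ') :
    nashApr σ u ≤ nashApr σ' u + dist1 σ σ' := by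
  refine Finset.sup'_le _ _ fun i _ => Finset.sup'_le _ _ fun b _ => ?_
  have h1 : |expUtil u i (Function.update σ i (pureStrat b))
      - expUtil u i (Function.update σ' i (pureStrat b))| ≤ (1/2) * dist1 σ σ' := by
    refine (abs_expUtil_sub_le' hu i (isMixed_update hσ i b) (isMixed_update hσ' i b)).trans ?_
    have := dist1_update_le σ σ' i b
    linarith
  have h2 : |expUtil u i σ - expUtil u i σ'| ≤ (1/2) * dist1 σ σ' :=
    abs_expUtil_sub_le' hu i hσ hσ'
  have h3 : expUtil u i (Function.update σ' i (pureStrat b)) - expUtil u i σ' ≤ nashApr σ' u := by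
    refine le_trans (Finset.le_sup'
      (fun b : A i => expUtil u i (Function.update σ' i (pureStrat b)) - expUtil u i σ')
      (Finset.mem_univ b)) ?_
    exact Finset.le_sup' (fun i : N => Finset.univ.sup' Finset.univ_nonempty
      fun b : A i => expUtil u i (Function.update σ' i (pureStrat b)) - expUtil u i σ')
      (Finset.mem_univ i)
  have e1 := abs_le.1 h1
  have e2 := abs_le.1 h2
  have := e1.2; have := e2.1
  linarith [e1.2, e2.1]

lemma abs_nashApr_sub_le {u : N → (∀ j, A j) → ℝ} (hu : ∀ i a, u i a ∈ Set.Icc (0:ℝ) 1)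
    {σ σ' : ∀ i, A i → ℝ} (hσ : IsMixedProfile σ) (hσ' : IsMixedProfile σ') :
    |nashApr σ u - nashApr σ' u| ≤ dist1 σ σ' := by
  rw [abs_le]
  constructor
  · have := nashApr_le_nashApr_add hu hσ' hσ
    rw [dist1_comm] at this
    linarith
  · have := nashApr_le_nashApr_add hu hσ hσ'
    linarith

lemma nashLoss_mem_Icc (h : NEApprox N A) (u : GameUtil N A) :
    nashLoss h u ∈ Set.Icc (0:ℝ) 1 :=
  ⟨nashApr_nonneg u.2 (h.2 u), nashApr_le_one u.2 (h.2 u)⟩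

lemma abs_nashLoss_sub_le (h g : NEApprox N A) (u : GameUtil N A) :
    |nashLoss h u - nashLoss g u| ≤ dist1 (h.1 u) (g.1 u) :=
  abs_nashApr_sub_le u.2 (h.2 u) (g.2 u)
lemma integrable_nashLoss (h : NEApprox N A) (hm : Measurable (nashLoss h))
    (D : Measure (GameUtil N A)) [IsProbabilityMeasure D] : Integrable (nashLoss h) D := by
  refine Integrable.mono' (integrable_const 1) hm.aestronglyMeasurable (ae_of_all _ fun u => ?_)
  rw [Real.norm_eq_abs, abs_of_nonneg (nashLoss_mem_Icc h u).1]
  exact (nashLoss_mem_Icc h u).2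

lemma abs_empRisk_sub_le {m : ℕ} (S : Fin m → GameUtil N A) (h g : NEApprox N A) (r : ℝ)
    (hr : 0 ≤ r) (hd : ∀ u, dist1 (h.1 u) (g.1 u) ≤ r) :
    |empRisk S h - empRisk S g| ≤ r := by
  unfold empRisk
  rw [← mul_sub, ← Finset.sum_sub_distrib, abs_mul]
  rcases Nat.eq_zero_or_pos m with hm | hm
  · subst hm; simpa using hr
  have h1 : |∑ j, (nashLoss h (S j) - nashLoss g (S j))| ≤ (m:ℝ) * r := by
    refine (Finset.abs_sum_le_sum_abs _ _).trans ?_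
    calc ∑ j, |nashLoss h (S j) - nashLoss g (S j)|
        ≤ ∑ _j : Fin m, r := Finset.sum_le_sum fun j _ =>
          (abs_nashLoss_sub_le h g (S j)).trans (hd (S j))
      _ = (m:ℝ) * r := by simp [mul_comm]
  have hmpos : (0:ℝ) < m := by exact_mod_cast hm
  calc |1 / (m:ℝ)| * |∑ j, (nashLoss h (S j) - nashLoss g (S j))|
      ≤ (1 / (m:ℝ)) * ((m:ℝ) * r) := by
        rw [abs_of_nonneg (by positivity : (0:ℝ) ≤ 1 / (m:ℝ))]
        exact mul_le_mul_of_nonneg_left h1 (by positivity)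
    _ = r := by field_simp
  
lemma abs_trueRisk_sub_le (D : Measure (GameUtil N A)) [IsProbabilityMeasure D]
    (h g : NEApprox N A) (hh : Measurable (nashLoss h)) (hg : Measurable (nashLoss g))
    (r : ℝ) (hd : ∀ u, dist1 (h.1 u) (g.1 u) ≤ r) :
    |trueRisk D h - trueRisk D g| ≤ r := by
  have hih := integrable_nashLoss h hh D
  have hig := integrable_nashLoss g hg D
  unfold trueRisk
  rw [← integral_sub hih hig]
  have hnorm := norm_integral_le_integral_norm (μ := D) (fun u => nashLoss h u - nashLoss g u)
  simp_rw [Real.norm_eq_abs] at hnorm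
  refine hnorm.trans ?_
  calc ∫ u, |nashLoss h u - nashLoss g u| ∂D
      ≤ ∫ _u, r ∂D := by
        refine integral_mono ((hih.sub hig).abs) (integrable_const r) fun u => ?_
        exact (abs_nashLoss_sub_le h g u).trans (hd u)
    _ = r := by simp
lemma exp_quad_bound {x : ℝ} (hx : |x| ≤ 1) : Real.exp x ≤ 1 + x + (3/4) * x^2 := by
  have h := Real.exp_bound hx (by norm_num : 0 < 2)
  have hs : ∑ m ∈ Finset.range 2, x ^ m / m.factorial = 1 + x := by
    simp [Finset.sum_range_succ]
  rw [hs] at h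
  norm_num [Nat.factorial] at h
  have h2 := (abs_le.1 h).2
  nlinarith [sq_abs x]

lemma integral_exp_mul_centered_le {α : Type*} [MeasurableSpace α]
    (D : Measure α) [IsProbabilityMeasure D]
    {f : α → ℝ} (hf : Measurable f) (hf01 : ∀ x, f x ∈ Set.Icc (0:ℝ) 1)
    {t : ℝ} (ht : |t| ≤ 1) :
    ∫ x, Real.exp (t * (f x - ∫ y, f y ∂D)) ∂D ≤ Real.exp (t^2 / 4) := by
  have hfi : Integrable f D := by
    refine Integrable.mono' (integrable_const 1) hf.aestronglyMeasurable
      (ae_of_all _ fun x => ?_)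
    rw [Real.norm_eq_abs, abs_of_nonneg (hf01 x).1]; exact (hf01 x).2
  set μ : ℝ := ∫ y, f y ∂D with hμdef
  have hμ0 : 0 ≤ μ := integral_nonneg fun x => (hf01 x).1
  have hμ1 : μ ≤ 1 := by
    have : μ ≤ ∫ _y, (1:ℝ) ∂D := integral_mono hfi (integrable_const 1) fun x => (hf01 x).2
    simpa using this
  set g : α → ℝ := fun x => f x - μ with hgdef
  have hgmeas : Measurable g := hf.sub measurable_const
  have hgbd : ∀ x, |g x| ≤ 1 := fun x => abs_le.2
    ⟨by have := (hf01 x).1; simp only [hgdef]; linarith,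
     by have := (hf01 x).2; simp only [hgdef]; linarith⟩
  have hgi : Integrable g D := hfi.sub (integrable_const μ)
  have hg2i : Integrable (fun x => g x ^ 2) D := by
    refine Integrable.mono' (integrable_const 1) (hgmeas.pow_const 2).aestronglyMeasurable
      (ae_of_all _ fun x => ?_)
    rw [Real.norm_eq_abs, abs_pow]
    calc |g x| ^ 2 ≤ 1 ^ 2 := by
          exact pow_le_pow_left₀ (abs_nonneg _) (hgbd x) 2
      _ = 1 := one_pow 2
  have hgint : ∫ x, g x ∂D = 0 := by
    simp only [hgdef]
    rw [integral_sub hfi (integrable_const μ), integral_const]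
    simp [hμdef]
  have hf2i : Integrable (fun x => f x ^ 2) D := by
    refine Integrable.mono' (integrable_const 1) (hf.pow_const 2).aestronglyMeasurable
      (ae_of_all _ fun x => ?_)
    rw [Real.norm_eq_abs, abs_pow, abs_of_nonneg (hf01 x).1]
    calc f x ^ 2 ≤ 1 ^ 2 := pow_le_pow_left₀ (hf01 x).1 (hf01 x).2 2
      _ = 1 := one_pow 2
  have hg2 : ∫ x, g x ^ 2 ∂D ≤ 1/4 := by
    have hexpand : ∀ x, g x ^ 2 = f x ^ 2 - 2 * μ * f x + μ ^ 2 := by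
      intro x; simp only [hgdef]; ring
    rw [integral_congr_ae (ae_of_all _ hexpand)]
    have i1 : Integrable (fun x => f x ^ 2 - 2 * μ * f x) D := hf2i.sub (hfi.const_mul (2*μ))
    rw [integral_add i1 (integrable_const _),
      integral_sub hf2i (hfi.const_mul (2*μ)), integral_const_mul, integral_const]
    have hf2le : ∫ x, f x ^ 2 ∂D ≤ μ := by
      rw [hμdef]
      refine integral_mono hf2i hfi fun x => ?_
      nlinarith [(hf01 x).1, (hf01 x).2]
    simp only [Measure.real, measure_univ, ENNReal.toReal_one, smul_eq_mul, one_mul]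
    rw [← hμdef]
    nlinarith [sq_nonneg (μ - 1/2)]
  have hpt : ∀ x, Real.exp (t * g x) ≤ 1 + t * g x + (3/4) * (t^2 * g x ^ 2) := by
    intro x
    have habs : |t * g x| ≤ 1 := by
      rw [abs_mul]
      calc |t| * |g x| ≤ 1 * 1 := mul_le_mul ht (hgbd x) (abs_nonneg _) zero_le_one
        _ = 1 := one_mul 1
    have := exp_quad_bound habs
    calc Real.exp (t * g x) ≤ 1 + t * g x + 3/4 * (t * g x)^2 := this
      _ = 1 + t * g x + (3/4) * (t^2 * g x ^ 2) := by ring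
  have hexpi : Integrable (fun x => Real.exp (t * g x)) D := by
    refine Integrable.mono' (integrable_const (Real.exp 1))
      ((hgmeas.const_mul t).exp).aestronglyMeasurable (ae_of_all _ fun x => ?_)
    rw [Real.norm_eq_abs, Real.abs_exp]
    refine Real.exp_le_exp.2 ?_
    calc t * g x ≤ |t * g x| := le_abs_self _
      _ ≤ 1 := by
        rw [abs_mul]
        calc |t| * |g x| ≤ 1 * 1 := mul_le_mul ht (hgbd x) (abs_nonneg _) zero_le_one
          _ = 1 := one_mul 1
  have hrhsi : Integrable (fun x => 1 + t * g x + (3/4) * (t^2 * g x ^ 2)) D := by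
    refine Integrable.add (Integrable.add (integrable_const 1) (hgi.const_mul t)) ?_
    exact (hg2i.const_mul (t^2)).const_mul (3/4)
  calc ∫ x, Real.exp (t * g x) ∂D
      ≤ ∫ x, (1 + t * g x + (3/4) * (t^2 * g x ^ 2)) ∂D := integral_mono hexpi hrhsi hpt
    _ = 1 + t * (∫ x, g x ∂D) + (3/4) * (t^2 * ∫ x, g x ^ 2 ∂D) := by
        have i2 : Integrable (fun x => 1 + t * g x) D := (integrable_const 1).add (hgi.const_mul t)
        have i3 : Integrable (fun x => (3/4) * (t^2 * g x ^ 2)) D :=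
          (hg2i.const_mul (t^2)).const_mul (3/4)
        have i4 : Integrable (fun x => t * g x) D := hgi.const_mul t
        rw [integral_add i2 i3, integral_add (integrable_const 1) i4,
          integral_const_mul, integral_const_mul, integral_const_mul, integral_const]
        simp
    _ ≤ 1 + t^2/4 := by
        rw [hgint]
        nlinarith [sq_nonneg t, hg2, integral_nonneg (μ := D) (f := fun x => g x ^ 2) (fun x => sq_nonneg (g x))]
    _ ≤ Real.exp (t^2/4) := by linarith [Real.add_one_le_exp (t^2/4)]
open ProbabilityTheory in
lemma chernoff_tail {α : Type*} [MeasurableSpace α] (D : Measure α) [IsProbabilityMeasure D]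
    {f : α → ℝ} (hf : Measurable f) (hf01 : ∀ x, f x ∈ Set.Icc (0:ℝ) 1)
    (m : ℕ) {t : ℝ} (c : ℝ) (ht0 : 0 ≤ t) (ht1 : t ≤ 1) :
    (MeasureTheory.Measure.pi fun _ : Fin m => D)
        {S : Fin m → α | (m:ℝ) * c ≤ ∑ j, (f (S j) - ∫ y, f y ∂D)}
      ≤ ENNReal.ofReal (Real.exp (-t * ((m:ℝ) * c) + (m:ℝ) * (t^2/4))) := by
  letI : MeasureSpace α := ⟨D⟩
  set μP : Measure (Fin m → α) := MeasureTheory.Measure.pi fun _ : Fin m => D with hμP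
  haveI : IsProbabilityMeasure μP := by
    constructor
    rw [hμP, Measure.pi_univ]
    simp
  set mu0 : ℝ := ∫ y, f y ∂D with hmu0
  set X : (Fin m → α) → ℝ := fun S => ∑ j, (f (S j) - mu0) with hX
  have hXmeas : Measurable X := by
    refine Finset.measurable_sum _ fun j _ => ?_
    exact (hf.comp (measurable_pi_apply j)).sub measurable_const
  have hmu00 : 0 ≤ mu0 := integral_nonneg fun x => (hf01 x).1
  have hmu01 : mu0 ≤ 1 := by
    have : mu0 ≤ ∫ _y, (1:ℝ) ∂D := integral_mono
      (by
        refine Integrable.mono' (integrable_const 1) hf.aestronglyMeasurable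
          (ae_of_all _ fun x => ?_)
        rw [Real.norm_eq_abs, abs_of_nonneg (hf01 x).1]; exact (hf01 x).2)
      (integrable_const 1) fun x => (hf01 x).2
    simpa using this
  have hXbd : ∀ S, |X S| ≤ (m:ℝ) := by
    intro S
    refine (Finset.abs_sum_le_sum_abs _ _).trans ?_
    calc ∑ j, |f (S j) - mu0| ≤ ∑ _j : Fin m, (1:ℝ) := by
          refine Finset.sum_le_sum fun j _ => ?_
          have h1 := (hf01 (S j)).1; have h2 := (hf01 (S j)).2
          rw [abs_le]; constructor <;> linarith
      _ = (m:ℝ) := by simp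
  have h_int : Integrable (fun S => Real.exp (t * X S)) μP := by
    refine Integrable.mono' (integrable_const (Real.exp ((m:ℝ))))
      ((hXmeas.const_mul t).exp).aestronglyMeasurable (ae_of_all _ fun S => ?_)
    rw [Real.norm_eq_abs, Real.abs_exp]
    refine Real.exp_le_exp.2 ?_
    calc t * X S ≤ |t * X S| := le_abs_self _
      _ = |t| * |X S| := abs_mul _ _
      _ ≤ 1 * (m:ℝ) := mul_le_mul (by rw [abs_of_nonneg ht0]; exact ht1) (hXbd S)
          (abs_nonneg _) zero_le_one
      _ = (m:ℝ) := one_mul _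
  have hmain := measure_ge_le_exp_mul_mgf (μ := μP) (X := X) ((m:ℝ) * c) ht0 h_int
  have hmgf : mgf X μP t ≤ Real.exp ((m:ℝ) * (t^2/4)) := by
    have hprod : ∀ S : Fin m → α, Real.exp (t * X S)
        = ∏ j, Real.exp (t * (f (S j) - mu0)) := by
      intro S
      rw [← Real.exp_sum, hX, Finset.mul_sum]
    have : mgf X μP t = (∫ x, Real.exp (t * (f x - mu0)) ∂D) ^ m := by
      unfold mgf
      rw [integral_congr_ae (ae_of_all _ hprod)]
      have := MeasureTheory.integral_fintype_prod_eq_pow (𝕜 := ℝ) (ι := Fin m) (μ := D)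
        (fun x => Real.exp (t * (f x - mu0)))
      simpa using this
    rw [this]
    calc (∫ x, Real.exp (t * (f x - mu0)) ∂D) ^ m
        ≤ (Real.exp (t^2/4)) ^ m := by
          refine pow_le_pow_left₀ (integral_nonneg fun x => (Real.exp_pos _).le) ?_ m
          exact integral_exp_mul_centered_le D hf hf01 (by rw [abs_of_nonneg ht0]; exact ht1)
      _ = Real.exp ((m:ℝ) * (t^2/4)) := by
          rw [← Real.exp_nat_mul]
  have hfin : μP {S | (m:ℝ) * c ≤ X S} ≠ ⊤ := measure_ne_top _ _
  calc μP {S | (m:ℝ) * c ≤ X S}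
      = ENNReal.ofReal ((μP {S | (m:ℝ) * c ≤ X S}).toReal) := (ENNReal.ofReal_toReal hfin).symm
    _ ≤ ENNReal.ofReal (Real.exp (-t * ((m:ℝ) * c) + (m:ℝ) * (t^2/4))) := by
        refine ENNReal.ofReal_le_ofReal ?_
        refine hmain.trans ?_
        rw [Real.exp_add]
        exact mul_le_mul_of_nonneg_left hmgf (Real.exp_pos _).le
end Aux

theorem uniform_convergence
    {N : Type*} [Fintype N] [DecidableEq N] [Nonempty N]
    {A : N → Type*} [∀ i, Fintype (A i)] [∀ i, DecidableEq (A i)] [∀ i, Nonempty (A i)]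
    (H : Set (NEApprox N A)) (hH : H.Nonempty)
    (hHmeas : ∀ h ∈ H, Measurable (nashLoss h))
    (D : Measure (GameUtil N A)) [IsProbabilityMeasure D]
    (ε δ : ℝ) (hε : ε ∈ Set.Ioo (0 : ℝ) 1) (hδ : δ ∈ Set.Ioo (0 : ℝ) 1)
    (C : Finset (NEApprox N A)) (hC : C.Nonempty) (K : ℕ) (hK : C.card = K)
    (hCmeas : ∀ g ∈ C, Measurable (nashLoss g))
    (hcover : Covers (ε / 6) C H)
    {m : ℕ}
    (hsetmeas : MeasurableSet
      {S : Fin m → GameUtil N A | ∃ h ∈ H, |empRisk S h - trueRisk D h| > ε})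
    (hm : 9 / (2 * ε ^ 2) * (Real.log (2 / δ) + Real.log K) ≤ (m : ℝ)) :
    ENNReal.ofReal (1 - δ) ≤
      (MeasureTheory.Measure.pi fun _ : Fin m => D)
        {S : Fin m → GameUtil N A | ∀ h ∈ H, |empRisk S h - trueRisk D h| ≤ ε} := by
  obtain ⟨hε0, hε1⟩ := hε
  obtain ⟨hδ0, hδ1⟩ := hδ
  set P : Measure (Fin m → GameUtil N A) := MeasureTheory.Measure.pi fun _ : Fin m => D with hP
  haveI : IsProbabilityMeasure P := by
    constructor
    rw [hP, Measure.pi_univ]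
    simp
  have hK1 : 1 ≤ K := hK ▸ Finset.card_pos.2 hC
  have hKpos : (0:ℝ) < K := by exact_mod_cast lt_of_lt_of_le zero_lt_one hK1
  have hL2 : 0 < Real.log (2/δ) := Real.log_pos (by rw [lt_div_iff₀ hδ0]; linarith)
  have hLK : 0 ≤ Real.log K := Real.log_nonneg (by exact_mod_cast hK1)
  have hmpos : 0 < (m:ℝ) := lt_of_lt_of_le (by positivity) hm
  -- The key numeric bound
  have hexp_le : Real.exp (-ε * ((m:ℝ) * (2*ε/3)) + (m:ℝ) * (ε^2/4)) ≤ δ / (2*K) := by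
    have h9 : (0:ℝ) < 9 / (2*ε^2) := by positivity
    have hLm : Real.log (2/δ) + Real.log K ≤ (m:ℝ) / (9 / (2*ε^2)) := by
      rw [le_div_iff₀ h9]
      linarith [mul_comm (9 / (2*ε^2)) (Real.log (2/δ) + Real.log (K:ℝ)), hm]
    have hdiv : (m:ℝ) / (9 / (2*ε^2)) = (2/9) * ((m:ℝ) * ε^2) := by
      field_simp
    rw [hdiv] at hLm
    have h1 : -ε * ((m:ℝ) * (2*ε/3)) + (m:ℝ) * (ε^2/4)
        ≤ -((2/9) * ((m:ℝ) * ε^2)) := by nlinarith [mul_nonneg hmpos.le (sq_nonneg ε)]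
    calc Real.exp (-ε * ((m:ℝ) * (2*ε/3)) + (m:ℝ) * (ε^2/4))
        ≤ Real.exp (-(Real.log (2/δ) + Real.log K)) := Real.exp_le_exp.2 (by linarith)
      _ = δ / (2*K) := by
          rw [neg_add, Real.exp_add, Real.exp_neg, Real.exp_neg,
            Real.exp_log (by positivity : (0:ℝ) < 2/δ), Real.exp_log hKpos]
          field_simp
  -- per-element tail bound
  have hbound : ∀ g ∈ C,
      P {S : Fin m → GameUtil N A | 2*ε/3 < |empRisk S g - trueRisk D g|}
        ≤ ENNReal.ofReal (δ / K) := by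
    intro g hg
    have hgm : Measurable (nashLoss g) := hCmeas g hg
    have hg01 : ∀ u, nashLoss g u ∈ Set.Icc (0:ℝ) 1 := nashLoss_mem_Icc g
    have higl : Integrable (nashLoss g) D := integrable_nashLoss g hgm D
    set T : ℝ := trueRisk D g with hT
    have hTint : T = ∫ y, nashLoss g y ∂D := rfl
    have hcompl : ∫ y, (1 - nashLoss g y) ∂D = 1 - T := by
      rw [integral_sub (integrable_const 1) higl, integral_const]
      simp [hTint]
    have hsub : {S : Fin m → GameUtil N A | 2*ε/3 < |empRisk S g - trueRisk D g|}
        ⊆ {S : Fin m → GameUtil N A | (m:ℝ) * (2*ε/3) ≤ ∑ j, (nashLoss g (S j) - ∫ y, nashLoss g y ∂D)}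
          ∪ {S : Fin m → GameUtil N A |
              (m:ℝ) * (2*ε/3) ≤ ∑ j, ((1 - nashLoss g (S j)) - ∫ y, (1 - nashLoss g y) ∂D)} := by
      intro S hS
      simp only [Set.mem_setOf_eq] at hS
      have hsum : (m:ℝ) * empRisk S g = ∑ j, nashLoss g (S j) := by
        unfold empRisk
        field_simp
      rcases lt_abs.1 hS with hcase | hcase
      · left
        simp only [Set.mem_setOf_eq]
        rw [Finset.sum_sub_distrib, Finset.sum_const, ← hTint]
        simp only [Finset.card_univ, Fintype.card_fin, nsmul_eq_mul]
        rw [← hsum]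
        nlinarith [hmpos]
      · right
        simp only [Set.mem_setOf_eq]
        rw [Finset.sum_sub_distrib, Finset.sum_const, hcompl]
        simp only [Finset.card_univ, Fintype.card_fin, nsmul_eq_mul]
        have : ∑ j, (1 - nashLoss g (S j)) = (m:ℝ) - (m:ℝ) * empRisk S g := by
          rw [Finset.sum_sub_distrib, Finset.sum_const, hsum]
          simp
        rw [this]
        nlinarith [hmpos]
    have ht1 : P {S : Fin m → GameUtil N A |
        (m:ℝ) * (2*ε/3) ≤ ∑ j, (nashLoss g (S j) - ∫ y, nashLoss g y ∂D)}
        ≤ ENNReal.ofReal (Real.exp (-ε * ((m:ℝ) * (2*ε/3)) + (m:ℝ) * (ε^2/4))) :=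
      chernoff_tail D hgm hg01 m (2*ε/3) hε0.le hε1.le
    have ht2 : P {S : Fin m → GameUtil N A |
        (m:ℝ) * (2*ε/3) ≤ ∑ j, ((1 - nashLoss g (S j)) - ∫ y, (1 - nashLoss g y) ∂D)}
        ≤ ENNReal.ofReal (Real.exp (-ε * ((m:ℝ) * (2*ε/3)) + (m:ℝ) * (ε^2/4))) :=
      chernoff_tail D (measurable_const.sub hgm)
        (fun u => ⟨by show 0 ≤ 1 - nashLoss g u; linarith [(hg01 u).2], by show 1 - nashLoss g u ≤ 1; linarith [(hg01 u).1]⟩)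
        m (2*ε/3) hε0.le hε1.le
    calc P {S : Fin m → GameUtil N A | 2*ε/3 < |empRisk S g - trueRisk D g|}
        ≤ P ({S : Fin m → GameUtil N A |
              (m:ℝ) * (2*ε/3) ≤ ∑ j, (nashLoss g (S j) - ∫ y, nashLoss g y ∂D)}
            ∪ {S : Fin m → GameUtil N A |
              (m:ℝ) * (2*ε/3) ≤ ∑ j, ((1 - nashLoss g (S j)) - ∫ y, (1 - nashLoss g y) ∂D)}) :=
          measure_mono hsub
      _ ≤ P {S : Fin m → GameUtil N A |
              (m:ℝ) * (2*ε/3) ≤ ∑ j, (nashLoss g (S j) - ∫ y, nashLoss g y ∂D)}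
          + P {S : Fin m → GameUtil N A |
              (m:ℝ) * (2*ε/3) ≤ ∑ j, ((1 - nashLoss g (S j)) - ∫ y, (1 - nashLoss g y) ∂D)} :=
          measure_union_le _ _
      _ ≤ ENNReal.ofReal (Real.exp (-ε * ((m:ℝ) * (2*ε/3)) + (m:ℝ) * (ε^2/4)))
          + ENNReal.ofReal (Real.exp (-ε * ((m:ℝ) * (2*ε/3)) + (m:ℝ) * (ε^2/4))) :=
          add_le_add ht1 ht2
      _ = ENNReal.ofReal (2 * Real.exp (-ε * ((m:ℝ) * (2*ε/3)) + (m:ℝ) * (ε^2/4))) := by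
          rw [← ENNReal.ofReal_add (Real.exp_pos _).le (Real.exp_pos _).le]
          ring_nf
      _ ≤ ENNReal.ofReal (δ / K) := by
          refine ENNReal.ofReal_le_ofReal ?_
          have heq : 2 * (δ/(2*K)) = δ/K := by field_simp
          linarith [hexp_le]
  -- union bound
  have hbadle : P {S : Fin m → GameUtil N A | ∃ h ∈ H, |empRisk S h - trueRisk D h| > ε}
      ≤ ENNReal.ofReal δ := by
    have hsub : {S : Fin m → GameUtil N A | ∃ h ∈ H, |empRisk S h - trueRisk D h| > ε}
        ⊆ ⋃ g ∈ C, {S : Fin m → GameUtil N A | 2*ε/3 < |empRisk S g - trueRisk D g|} := by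
      intro S hS
      obtain ⟨h, hh, hgt⟩ := hS
      obtain ⟨g, hgC, hgd⟩ := hcover h hh
      refine Set.mem_biUnion hgC ?_
      have h1 : |empRisk S h - empRisk S g| ≤ ε/6 :=
        abs_empRisk_sub_le S h g (ε/6) (by linarith) hgd
      have h2 : |trueRisk D h - trueRisk D g| ≤ ε/6 :=
        abs_trueRisk_sub_le D h g (hHmeas h hh) (hCmeas g hgC) (ε/6) hgd
      have h3 : |(empRisk S h - trueRisk D h) - (empRisk S g - trueRisk D g)| ≤ ε/3 := by
        have heq : (empRisk S h - trueRisk D h) - (empRisk S g - trueRisk D g)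
            = (empRisk S h - empRisk S g) - (trueRisk D h - trueRisk D g) := by ring
        rw [heq]
        calc |(empRisk S h - empRisk S g) - (trueRisk D h - trueRisk D g)|
            ≤ |empRisk S h - empRisk S g| + |trueRisk D h - trueRisk D g| := abs_sub _ _
          _ ≤ ε/3 := by linarith
      have h4 := abs_sub_abs_le_abs_sub (empRisk S h - trueRisk D h)
        (empRisk S g - trueRisk D g)
      show 2*ε/3 < |empRisk S g - trueRisk D g|
      have hgt' : ε < |empRisk S h - trueRisk D h| := hgt
      linarith
    calc P {S : Fin m → GameUtil N A | ∃ h ∈ H, |empRisk S h - trueRisk D h| > ε}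
        ≤ P (⋃ g ∈ C, {S : Fin m → GameUtil N A | 2*ε/3 < |empRisk S g - trueRisk D g|}) :=
          measure_mono hsub
      _ ≤ ∑ g ∈ C, P {S : Fin m → GameUtil N A | 2*ε/3 < |empRisk S g - trueRisk D g|} :=
          measure_biUnion_finset_le C _
      _ ≤ ∑ _g ∈ C, ENNReal.ofReal (δ / K) := Finset.sum_le_sum hbound
      _ = C.card • ENNReal.ofReal (δ / K) := Finset.sum_const _
      _ = ENNReal.ofReal δ := by
          rw [hK, nsmul_eq_mul, ← ENNReal.ofReal_natCast K,
            ← ENNReal.ofReal_mul (by positivity : (0:ℝ) ≤ (K:ℝ))]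
          congr 1
          field_simp
  -- conclude
  have hgoal : {S : Fin m → GameUtil N A | ∀ h ∈ H, |empRisk S h - trueRisk D h| ≤ ε}
      = {S : Fin m → GameUtil N A | ∃ h ∈ H, |empRisk S h - trueRisk D h| > ε}ᶜ := by
    ext S
    simp only [Set.mem_setOf_eq, Set.mem_compl_iff, not_exists, not_lt, gt_iff_lt]
    constructor
    · intro hall
      intro h
      simp only [not_and, not_lt]
      intro hh
      exact hall h hh
    · intro hall h hh
      have := hall h
      simp only [not_and, not_lt] at this
      exact this hh
  rw [hgoal, prob_compl_eq_one_sub hsetmeas]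
  calc ENNReal.ofReal (1-δ)
      = 1 - ENNReal.ofReal δ := by
        rw [ENNReal.ofReal_sub 1 hδ0.le, ENNReal.ofReal_one]
    _ ≤ 1 - P {S : Fin m → GameUtil N A | ∃ h ∈ H, |empRisk S h - trueRisk D h| > ε} :=
        tsub_le_tsub_left hbadle 1
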